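/- Let γ > 0 and p > 0. The smooth Schatten-p function f_p : ℝ^{m×n} → ℝ defined by f_p(X) = Tr((XᵀX + γI)^{p/2}), where the matrix power is taken via the spectral functional calculus applied to the symmetric positive definite matrix XᵀX + γI, is differentiable as a function of X on all of ℝ^{m×n}. -/

import Mathlib

open Matrix

attribute [local instance] Matrix.normedAddCommGroup Matrix.normedSpace

open Filter Finset Topology

@[reducible] noncomputable def matUniformSpace {a b : ℕ} : UniformSpace (Matrix (Fin a) (Fin b) ℝ) :=
  (Matrix.normedAddCommGroup : NormedAddCommGroup (Matrix (Fin a) (Fin b) ℝ)).toUniformSpace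

@[reducible] noncomputable def matTopologicalSpace {a b : ℕ} : TopologicalSpace (Matrix (Fin a) (Fin b) ℝ) :=
  (Matrix.normedAddCommGroup : NormedAddCommGroup (Matrix (Fin a) (Fin b) ℝ)).toUniformSpace.toTopologicalSpace

section MatTop
attribute [local instance] matUniformSpace matTopologicalSpace


section Part1
variable {a b c : ℕ}

lemma mat_norm_le {A : Matrix (Fin a) (Fin b) ℝ} {C : ℝ} (hC : 0 ≤ C)
    (h : ∀ i j, |A i j| ≤ C) : ‖A‖ ≤ C :=
  (pi_norm_le_iff_of_nonneg hC).2 fun i => (pi_norm_le_iff_of_nonneg hC).2 fun j => h i j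

lemma mat_entry_le (A : Matrix (Fin a) (Fin b) ℝ) (i j) : |A i j| ≤ ‖A‖ :=
  Matrix.norm_entry_le_entrywise_sup_norm A

lemma mat_mul_entry_le (A : Matrix (Fin a) (Fin b) ℝ) (B : Matrix (Fin b) (Fin c) ℝ) (i j) :
    |(A * B) i j| ≤ b * ‖A‖ * ‖B‖ := by
  rw [Matrix.mul_apply]
  calc |∑ k, A i k * B k j| ≤ ∑ k, |A i k * B k j| := Finset.abs_sum_le_sum_abs _ _
    _ ≤ ∑ _k : Fin b, ‖A‖ * ‖B‖ := by
        refine Finset.sum_le_sum fun k _ => ?_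
        rw [abs_mul]
        exact mul_le_mul (mat_entry_le A i k) (mat_entry_le B k j) (abs_nonneg _)
          (norm_nonneg _)
    _ = b * ‖A‖ * ‖B‖ := by simp [mul_assoc]

lemma mat_mul_norm_le (A : Matrix (Fin a) (Fin b) ℝ) (B : Matrix (Fin b) (Fin c) ℝ) :
    ‖A * B‖ ≤ b * ‖A‖ * ‖B‖ :=
  mat_norm_le (by positivity) (mat_mul_entry_le A B)

lemma isBoundedBilinearMap_matMul :
    IsBoundedBilinearMap ℝ
      (fun p : Matrix (Fin a) (Fin b) ℝ × Matrix (Fin b) (Fin c) ℝ => p.1 * p.2) where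
  add_left := fun A A' B => Matrix.add_mul A A' B
  smul_left := fun r A B => Matrix.smul_mul r A B
  add_right := fun A B B' => Matrix.mul_add A B B'
  smul_right := fun r A B => Matrix.mul_smul A r B
  bound := ⟨b + 1, by positivity, fun A B =>
    (mat_mul_norm_le A B).trans (by
      have := norm_nonneg A
      have := norm_nonneg B
      nlinarith [mul_nonneg (norm_nonneg A) (norm_nonneg B)])⟩

end Part1

section Part2
variable {a b c d : ℕ}

noncomputable def lmulCLM (C : Matrix (Fin a) (Fin b) ℝ) :
    Matrix (Fin b) (Fin c) ℝ →L[ℝ] Matrix (Fin a) (Fin c) ℝ :=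
  LinearMap.toContinuousLinearMap
    { toFun := fun B => C * B
      map_add' := fun B B' => Matrix.mul_add C B B'
      map_smul' := fun r B => Matrix.mul_smul C r B }

@[simp] lemma lmulCLM_apply (C : Matrix (Fin a) (Fin b) ℝ) (B : Matrix (Fin b) (Fin c) ℝ) :
    lmulCLM C B = C * B := rfl

noncomputable def rmulCLM (C : Matrix (Fin b) (Fin c) ℝ) :
    Matrix (Fin a) (Fin b) ℝ →L[ℝ] Matrix (Fin a) (Fin c) ℝ :=
  LinearMap.toContinuousLinearMap
    { toFun := fun B => B * C
      map_add' := fun B B' => Matrix.add_mul B B' C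
      map_smul' := fun r B => Matrix.smul_mul r B C }

@[simp] lemma rmulCLM_apply (C : Matrix (Fin b) (Fin c) ℝ) (B : Matrix (Fin a) (Fin b) ℝ) :
    rmulCLM C B = B * C := rfl

noncomputable def traceCLM (n : ℕ) : Matrix (Fin n) (Fin n) ℝ →L[ℝ] ℝ :=
  LinearMap.toContinuousLinearMap (Matrix.traceLinearMap (Fin n) ℝ ℝ)

@[simp] lemma traceCLM_apply {n : ℕ} (A : Matrix (Fin n) (Fin n) ℝ) :
    traceCLM n A = A.trace := rfl

noncomputable def transCLM (a b : ℕ) :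
    Matrix (Fin a) (Fin b) ℝ →L[ℝ] Matrix (Fin b) (Fin a) ℝ :=
  LinearMap.toContinuousLinearMap
    { toFun := fun B => Bᵀ
      map_add' := fun B B' => Matrix.transpose_add B B'
      map_smul' := fun r B => Matrix.transpose_smul r B }

@[simp] lemma transCLM_apply (B : Matrix (Fin a) (Fin b) ℝ) : transCLM a b B = Bᵀ := rfl

variable {X : Type*} [NormedAddCommGroup X] [NormedSpace ℝ X]

lemma HasFDerivAt.matMul {u : X → Matrix (Fin a) (Fin b) ℝ} {v : X → Matrix (Fin b) (Fin c) ℝ}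
    {U : X →L[ℝ] Matrix (Fin a) (Fin b) ℝ} {V : X →L[ℝ] Matrix (Fin b) (Fin c) ℝ} {x : X}
    (hu : HasFDerivAt u U x) (hv : HasFDerivAt v V x)
    {D : X →L[ℝ] Matrix (Fin a) (Fin c) ℝ}
    (hD : ∀ h, D h = u x * V h + U h * v x) :
    HasFDerivAt (fun y => u y * v y) D x := by
  have h1 := (isBoundedBilinearMap_matMul.hasFDerivAt (u x, v x)).comp x (hu.prodMk hv)
  refine HasFDerivAt.congr_fderiv h1 ?_
  ext h
  rw [hD h]
  simp [isBoundedBilinearMap_matMul.deriv_apply]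

end Part2

section Part3
variable {n : ℕ}

lemma hasFDerivAt_matPow (k : ℕ) (Y : Matrix (Fin n) (Fin n) ℝ) :
    HasFDerivAt (fun Z : Matrix (Fin n) (Fin n) ℝ => Z ^ k)
      (∑ j ∈ Finset.range k, (lmulCLM (Y ^ j)).comp (rmulCLM (Y ^ (k - 1 - j)))) Y := by
  induction k with
  | zero => simpa using hasFDerivAt_const (1 : Matrix (Fin n) (Fin n) ℝ) Y
  | succ k ih =>
    have key : ∀ h : Matrix (Fin n) (Fin n) ℝ,
        (∑ j ∈ Finset.range (k + 1),
          (lmulCLM (Y ^ j)).comp (rmulCLM (Y ^ (k + 1 - 1 - j)))) h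
        = Y ^ k * (ContinuousLinearMap.id ℝ (Matrix (Fin n) (Fin n) ℝ)) h
          + (∑ j ∈ Finset.range k,
              (lmulCLM (Y ^ j)).comp (rmulCLM (Y ^ (k - 1 - j)))) h * Y := by
      intro h
      simp only [ContinuousLinearMap.sum_apply, ContinuousLinearMap.comp_apply,
        lmulCLM_apply, rmulCLM_apply, ContinuousLinearMap.id_apply, Finset.sum_mul]
      rw [Finset.sum_range_succ]
      have e0 : k + 1 - 1 - k = 0 := by omega
      rw [e0, pow_zero, mul_one, add_comm]
      congr 1
      refine Finset.sum_congr rfl fun j hj => ?_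
      have hj' : j < k := Finset.mem_range.mp hj
      have e : k + 1 - 1 - j = (k - 1 - j) + 1 := by omega
      rw [e, pow_succ, mul_assoc (Y ^ j), ← mul_assoc h, ← mul_assoc (Y ^ j), ← mul_assoc (Y ^ j)]
    have h2 := HasFDerivAt.matMul ih (hasFDerivAt_id Y) key
    simp only [pow_succ]
    exact h2

lemma hasFDerivAt_trace_pow (k : ℕ) (Y : Matrix (Fin n) (Fin n) ℝ) :
    HasFDerivAt (fun Z : Matrix (Fin n) (Fin n) ℝ => (Z ^ k).trace)
      ((k : ℝ) • ((traceCLM n).comp (lmulCLM (Y ^ (k - 1))))) Y := by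
  have h := (traceCLM n).hasFDerivAt.comp Y (hasFDerivAt_matPow k Y)
  have heq : (traceCLM n).comp
      (∑ j ∈ Finset.range k, (lmulCLM (Y ^ j)).comp (rmulCLM (Y ^ (k - 1 - j))))
      = (k : ℝ) • ((traceCLM n).comp (lmulCLM (Y ^ (k - 1)))) := by
    ext h'
    simp only [ContinuousLinearMap.comp_apply, ContinuousLinearMap.sum_apply,
      ContinuousLinearMap.smul_apply, lmulCLM_apply, rmulCLM_apply, traceCLM_apply,
      ContinuousLinearMap.coe_sum', Finset.sum_apply, smul_eq_mul]
    have : ∀ j ∈ Finset.range k, (Y ^ j * (h' * Y ^ (k - 1 - j))).trace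
        = (Y ^ (k - 1) * h').trace := by
      intro j hj
      have hj' : j < k := Finset.mem_range.mp hj
      have e2 : k - 1 - j + j = k - 1 := by omega
      rw [← mul_assoc, Matrix.trace_mul_cycle, ← pow_add, e2]
    rw [Matrix.trace_sum, Finset.sum_congr rfl this, Finset.sum_const, Finset.card_range, nsmul_eq_mul]
  rw [heq] at h
  exact h
end Part3

section Part4
variable {m n : ℕ}

noncomputable def Aderiv (m n : ℕ) (X : Matrix (Fin m) (Fin n) ℝ) :
    Matrix (Fin m) (Fin n) ℝ →L[ℝ] Matrix (Fin n) (Fin n) ℝ :=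
  lmulCLM Xᵀ + (rmulCLM X).comp (transCLM m n)

lemma Aderiv_apply (X : Matrix (Fin m) (Fin n) ℝ) (h : Matrix (Fin m) (Fin n) ℝ) :
    Aderiv m n X h = Xᵀ * h + hᵀ * X := rfl

lemma hasFDerivAt_Amap (γ : ℝ) (X : Matrix (Fin m) (Fin n) ℝ) :
    HasFDerivAt (fun Y : Matrix (Fin m) (Fin n) ℝ => Yᵀ * Y + γ • (1 : Matrix (Fin n) (Fin n) ℝ))
      (Aderiv m n X) X := by
  have h1 : HasFDerivAt (fun Y : Matrix (Fin m) (Fin n) ℝ => Yᵀ * Y) (Aderiv m n X) X := by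
    refine HasFDerivAt.matMul (u := fun Y : Matrix (Fin m) (Fin n) ℝ => Yᵀ)
      (v := fun Y => Y) ((transCLM m n).hasFDerivAt) (hasFDerivAt_id X) ?_
    intro h
    rfl
  exact h1.add_const _

noncomputable def Dpow (γ : ℝ) (i : ℕ) (X : Matrix (Fin m) (Fin n) ℝ) :
    Matrix (Fin m) (Fin n) ℝ →L[ℝ] ℝ :=
  ((i : ℝ) • ((traceCLM n).comp
    (lmulCLM ((Xᵀ * X + γ • (1 : Matrix (Fin n) (Fin n) ℝ)) ^ (i - 1))))).comp (Aderiv m n X)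

lemma hasFDerivAt_trace_pow_A (γ : ℝ) (i : ℕ) (X : Matrix (Fin m) (Fin n) ℝ) :
    HasFDerivAt
      (fun Y : Matrix (Fin m) (Fin n) ℝ =>
        ((Yᵀ * Y + γ • (1 : Matrix (Fin n) (Fin n) ℝ)) ^ i).trace)
      (Dpow γ i X) X :=
  (hasFDerivAt_trace_pow i _).comp X (hasFDerivAt_Amap γ X)

end Part4

section Part5
variable {n : ℕ} {A : Matrix (Fin n) (Fin n) ℝ}

lemma star_mul_self_U (hA : A.IsHermitian) :
    star (hA.eigenvectorUnitary : Matrix (Fin n) (Fin n) ℝ)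
      * (hA.eigenvectorUnitary : Matrix (Fin n) (Fin n) ℝ) = 1 :=
  Unitary.star_mul_self_of_mem (SetLike.coe_mem _)

lemma mul_star_self_U (hA : A.IsHermitian) :
    (hA.eigenvectorUnitary : Matrix (Fin n) (Fin n) ℝ)
      * star (hA.eigenvectorUnitary : Matrix (Fin n) (Fin n) ℝ) = 1 :=
  Unitary.mul_star_self_of_mem (SetLike.coe_mem _)

lemma cfc_real (hA : A.IsHermitian) (f : ℝ → ℝ) :
    hA.cfc f = (hA.eigenvectorUnitary : Matrix (Fin n) (Fin n) ℝ)
      * Matrix.diagonal (f ∘ hA.eigenvalues)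
      * star (hA.eigenvectorUnitary : Matrix (Fin n) (Fin n) ℝ) := rfl

lemma trace_cfc' (hA : A.IsHermitian) (f : ℝ → ℝ) :
    (hA.cfc f).trace = ∑ i, f (hA.eigenvalues i) := by
  rw [cfc_real, Matrix.trace_mul_cycle, star_mul_self_U, one_mul,
    Matrix.trace_diagonal]
  rfl

lemma entry_le_one_of_unitary {U : Matrix (Fin n) (Fin n) ℝ}
    (hU : star U * U = 1) (i j : Fin n) : |U i j| ≤ 1 := by
  have h1 : ∑ k, U k j * U k j = 1 := by
    have h := congrFun (congrFun hU j) j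
    simpa [Matrix.mul_apply, Matrix.star_apply, Matrix.one_apply] using h
  have h2 : U i j * U i j ≤ 1 := by
    rw [← h1]
    exact Finset.single_le_sum (fun k _ => mul_self_nonneg (U k j)) (Finset.mem_univ i)
  exact abs_le_one_iff_mul_self_le_one.mpr h2

lemma cfc_entry_le (hA : A.IsHermitian) {f : ℝ → ℝ} {δ : ℝ}
    (hf : ∀ i, |f (hA.eigenvalues i)| ≤ δ) (a b : Fin n) :
    |hA.cfc f a b| ≤ n * δ := by
  have hδ : 0 ≤ δ := le_trans (abs_nonneg _) (hf a)
  rw [cfc_real]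
  have hentry :
      ((hA.eigenvectorUnitary : Matrix (Fin n) (Fin n) ℝ) * Matrix.diagonal (f ∘ hA.eigenvalues)
        * star (hA.eigenvectorUnitary : Matrix (Fin n) (Fin n) ℝ)) a b
      = ∑ l : Fin n, (hA.eigenvectorUnitary : Matrix (Fin n) (Fin n) ℝ) a l
          * f (hA.eigenvalues l) * (hA.eigenvectorUnitary : Matrix (Fin n) (Fin n) ℝ) b l := by
    rw [Matrix.mul_apply]
    refine Finset.sum_congr rfl fun l _ => ?_
    rw [Matrix.mul_diagonal, Matrix.star_apply]
    simp [Function.comp]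
  rw [hentry]
  calc |∑ l : Fin n, (hA.eigenvectorUnitary : Matrix (Fin n) (Fin n) ℝ) a l
          * f (hA.eigenvalues l) * (hA.eigenvectorUnitary : Matrix (Fin n) (Fin n) ℝ) b l|
      ≤ ∑ l : Fin n, |(hA.eigenvectorUnitary : Matrix (Fin n) (Fin n) ℝ) a l
          * f (hA.eigenvalues l) * (hA.eigenvectorUnitary : Matrix (Fin n) (Fin n) ℝ) b l| :=
        Finset.abs_sum_le_sum_abs _ _
    _ ≤ ∑ _l : Fin n, δ := by
        refine Finset.sum_le_sum fun l _ => ?_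
        rw [abs_mul, abs_mul]
        have h1 := entry_le_one_of_unitary (star_mul_self_U hA) a l
        have h2 := entry_le_one_of_unitary (star_mul_self_U hA) b l
        have h3 := hf l
        have n2 := abs_nonneg (f (hA.eigenvalues l))
        have n3 := abs_nonneg ((hA.eigenvectorUnitary : Matrix (Fin n) (Fin n) ℝ) b l)
        have s1 : |(hA.eigenvectorUnitary : Matrix (Fin n) (Fin n) ℝ) a l|
            * |f (hA.eigenvalues l)| ≤ δ := by
          have := mul_le_mul h1 h3 n2 zero_le_one
          simpa using this
        have := mul_le_mul s1 h2 n3 hδ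
        simpa using this
    _ = n * δ := by simp [mul_comm]

end Part5

section Part6
variable {n : ℕ} {A : Matrix (Fin n) (Fin n) ℝ}

lemma abs_trace_mul_le {B C : Matrix (Fin n) (Fin n) ℝ} {β c : ℝ} (hβ : 0 ≤ β) (hc : 0 ≤ c)
    (hB : ∀ a b, |B a b| ≤ β) (hC : ∀ a b, |C a b| ≤ c) :
    |(B * C).trace| ≤ n ^ 2 * β * c := by
  rw [Matrix.trace]
  calc |∑ a, (B * C) a a| ≤ ∑ a, |(B * C) a a| := Finset.abs_sum_le_sum_abs _ _
    _ ≤ ∑ _a : Fin n, n * (β * c) := by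
        refine Finset.sum_le_sum fun a _ => ?_
        rw [Matrix.mul_apply]
        calc |∑ b, B a b * C b a| ≤ ∑ b, |B a b * C b a| := Finset.abs_sum_le_sum_abs _ _
          _ ≤ ∑ _b : Fin n, β * c := by
              refine Finset.sum_le_sum fun b _ => ?_
              rw [abs_mul]
              exact mul_le_mul (hB a b) (hC b a) (abs_nonneg _) hβ
          _ = n * (β * c) := by simp [mul_comm]
    _ = n ^ 2 * β * c := by simp; ring
  -- note diag_apply
  
lemma conj_pow' {U D V : Matrix (Fin n) (Fin n) ℝ} (hVU : V * U = 1) (hUV : U * V = 1) (i : ℕ) :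
    (U * D * V) ^ i = U * D ^ i * V := by
  induction i with
  | zero => simpa using hUV.symm
  | succ i ih =>
    rw [pow_succ, ih, pow_succ]
    rw [← mul_assoc, ← mul_assoc, mul_assoc (U * D ^ i) V U, hVU, mul_one, mul_assoc U (D ^ i) D]

lemma cfc_pow' (hA : A.IsHermitian) (i : ℕ) : hA.cfc (fun t => t ^ i) = A ^ i := by
  conv_rhs => rw [hA.spectral_theorem, Unitary.conjStarAlgAut_apply,
    conj_pow' (star_mul_self_U hA) (mul_star_self_U hA) i, Matrix.diagonal_pow]
  rfl

lemma cfc_add' (hA : A.IsHermitian) (f g : ℝ → ℝ) :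
    hA.cfc (fun t => f t + g t) = hA.cfc f + hA.cfc g := by
  rw [cfc_real, cfc_real, cfc_real]
  have : Matrix.diagonal ((fun t => f t + g t) ∘ hA.eigenvalues)
      = Matrix.diagonal (f ∘ hA.eigenvalues) + Matrix.diagonal (g ∘ hA.eigenvalues) := by
    ext i j
    rcases eq_or_ne i j with h | h <;>
      simp [Matrix.diagonal_apply, h, Function.comp]
  rw [this, Matrix.mul_add, Matrix.add_mul]

lemma cfc_smul' (hA : A.IsHermitian) (r : ℝ) (f : ℝ → ℝ) :
    hA.cfc (fun t => r * f t) = r • hA.cfc f := by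
  rw [cfc_real, cfc_real]
  have : Matrix.diagonal ((fun t => r * f t) ∘ hA.eigenvalues)
      = r • Matrix.diagonal (f ∘ hA.eigenvalues) := by
    ext i j
    rcases eq_or_ne i j with h | h <;>
      simp [Matrix.diagonal_apply, h, Function.comp]
  rw [this, Matrix.mul_smul, Matrix.smul_mul]

lemma cfc_zero' (hA : A.IsHermitian) : hA.cfc (fun _ => 0) = 0 := by
  rw [cfc_real]
  have : Matrix.diagonal ((fun _ : ℝ => (0:ℝ)) ∘ hA.eigenvalues)
      = (0 : Matrix (Fin n) (Fin n) ℝ) := by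
    ext i j
    rcases eq_or_ne i j with h | h <;>
      simp [Matrix.diagonal_apply, h, Function.comp]
  rw [this, Matrix.mul_zero, Matrix.zero_mul]

lemma cfc_sub' (hA : A.IsHermitian) (f g : ℝ → ℝ) :
    hA.cfc (fun t => f t - g t) = hA.cfc f - hA.cfc g := by
  have h1 : hA.cfc (fun t => g t + (f t - g t)) = hA.cfc g + hA.cfc (fun t => f t - g t) :=
    cfc_add' hA g (fun t => f t - g t)
  have h2 : (fun t => g t + (f t - g t)) = f := by funext t; ring
  rw [h2] at h1
  rw [eq_sub_iff_add_eq, h1]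
  exact add_comm _ _

lemma cfc_finsum {ι : Type*} (hA : A.IsHermitian) (s : Finset ι) (c : ι → ℝ) (e : ι → ℕ) :
    hA.cfc (fun t => ∑ i ∈ s, c i * t ^ e i) = ∑ i ∈ s, c i • A ^ e i := by
  classical
  induction s using Finset.induction_on with
  | empty => simpa using cfc_zero' hA
  | insert x s' hx ih =>
    have : (fun t => ∑ i ∈ insert x s', c i * t ^ e i)
        = fun t => c x * t ^ e x + ∑ i ∈ s', c i * t ^ e i := by
      funext t; rw [Finset.sum_insert hx]
    rw [this, cfc_add' hA, Finset.sum_insert hx, ih, cfc_smul' hA, cfc_pow' hA]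

end Part6

section Part7
variable {m n : ℕ}

lemma trace_eq_sum_eig {A : Matrix (Fin n) (Fin n) ℝ} (hA : A.IsHermitian) :
    A.trace = ∑ i, hA.eigenvalues i := by
  have h := trace_cfc' hA (fun t => t)
  rw [show hA.cfc (fun t => t) = A from by simpa using cfc_pow' hA 1] at h
  exact h

lemma eig_ge {γ : ℝ} (hγ : 0 < γ) (X : Matrix (Fin m) (Fin n) ℝ)
    (hA : (Xᵀ * X + γ • (1 : Matrix (Fin n) (Fin n) ℝ)).IsHermitian) (i : Fin n) :
    γ ≤ hA.eigenvalues i := by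
  by_contra hlt
  push_neg at hlt
  have hmem := hA.eigenvalues_mem_spectrum_real i
  set μ := hA.eigenvalues i with hμ
  have hPSD : (Xᵀ * X).PosSemidef := by
    have h := Matrix.posSemidef_conjTranspose_mul_self X
    rwa [Matrix.conjTranspose_eq_transpose_of_trivial] at h
  have hPD : (Xᵀ * X + (γ - μ) • (1 : Matrix (Fin n) (Fin n) ℝ)).PosDef := by
    refine Matrix.PosDef.posSemidef_add hPSD ?_
    rw [Matrix.smul_one_eq_diagonal]
    exact Matrix.posDef_diagonal_iff.mpr fun _ => by linarith
  have hUnit : IsUnit (Xᵀ * X + (γ - μ) • (1 : Matrix (Fin n) (Fin n) ℝ)) :=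
    (Matrix.isUnit_iff_isUnit_det _).mpr (isUnit_iff_ne_zero.mpr hPD.det_pos.ne')
  have heq : algebraMap ℝ (Matrix (Fin n) (Fin n) ℝ) μ
      - (Xᵀ * X + γ • (1 : Matrix (Fin n) (Fin n) ℝ))
      = -(Xᵀ * X + (γ - μ) • (1 : Matrix (Fin n) (Fin n) ℝ)) := by
    rw [Algebra.algebraMap_eq_smul_one, sub_smul]
    abel
  have hns := spectrum.mem_iff.mp hmem
  rw [heq] at hns
  exact hns hUnit.neg

lemma eig_le {γ R : ℝ} (hγ : 0 < γ) (hR : 0 ≤ R) (X : Matrix (Fin m) (Fin n) ℝ)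
    (hX : ‖X‖ ≤ R)
    (hA : (Xᵀ * X + γ • (1 : Matrix (Fin n) (Fin n) ℝ)).IsHermitian) (i : Fin n) :
    hA.eigenvalues i ≤ γ + m * n * R ^ 2 := by
  have htr := trace_eq_sum_eig hA
  have htrXX : (Xᵀ * X).trace ≤ m * n * R ^ 2 := by
    rw [Matrix.trace]
    calc ∑ j, (Xᵀ * X).diag j ≤ ∑ _j : Fin n, (m * R ^ 2 : ℝ) := by
          refine Finset.sum_le_sum fun j _ => ?_
          rw [Matrix.diag_apply, Matrix.mul_apply]
          calc ∑ k, Xᵀ j k * X k j = ∑ k, X k j * X k j := by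
                refine Finset.sum_congr rfl fun k _ => ?_
                rw [Matrix.transpose_apply]
            _ ≤ ∑ _k : Fin m, (R ^ 2 : ℝ) := by
                refine Finset.sum_le_sum fun k _ => ?_
                have h1 : |X k j| ≤ R := le_trans (mat_entry_le X k j) hX
                calc X k j * X k j = |X k j| * |X k j| := (abs_mul_abs_self _).symm
                  _ ≤ R * R := mul_le_mul h1 h1 (abs_nonneg _) hR
                  _ = R ^ 2 := (sq R).symm
            _ = m * R ^ 2 := by simp
      _ = n * (m * R ^ 2) := by simp
      _ = m * n * R ^ 2 := by ring
  have htrfull : (Xᵀ * X + γ • (1 : Matrix (Fin n) (Fin n) ℝ)).trace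
      = (Xᵀ * X).trace + n * γ := by
    rw [Matrix.trace_add, Matrix.trace_smul, Matrix.trace_one]
    simp [smul_eq_mul, mul_comm]
  have hrest : (n - 1 : ℝ) * γ ≤ ∑ j ∈ Finset.univ.erase i, hA.eigenvalues j := by
    have hcard : (Finset.univ.erase i).card = n - 1 := by
      rw [Finset.card_erase_of_mem (Finset.mem_univ i), Finset.card_univ, Fintype.card_fin]
    have h1 : ∑ j ∈ Finset.univ.erase i, γ ≤ ∑ j ∈ Finset.univ.erase i, hA.eigenvalues j :=
      Finset.sum_le_sum fun j _ => eig_ge hγ X hA j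
    rw [Finset.sum_const, hcard, nsmul_eq_mul] at h1
    have hn1 : 1 ≤ n := i.pos
    rwa [Nat.cast_sub hn1, Nat.cast_one] at h1
  have hsplit : hA.eigenvalues i + ∑ j ∈ Finset.univ.erase i, hA.eigenvalues j
      = ∑ j, hA.eigenvalues j := Finset.add_sum_erase _ _ (Finset.mem_univ i)
  linarith

end Part7

section Part8
variable {m n : ℕ}

lemma norm_transpose_le (X : Matrix (Fin m) (Fin n) ℝ) : ‖Xᵀ‖ ≤ ‖X‖ :=
  mat_norm_le (norm_nonneg X) fun i j => mat_entry_le X j i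

lemma value_bound {A : Matrix (Fin n) (Fin n) ℝ} (hA : A.IsHermitian) {h : ℝ → ℝ} {δ : ℝ}
    (hh : ∀ i, |h (hA.eigenvalues i)| ≤ δ) : |(hA.cfc h).trace| ≤ n * δ := by
  rw [trace_cfc']
  calc |∑ i, h (hA.eigenvalues i)| ≤ ∑ i, |h (hA.eigenvalues i)| :=
        Finset.abs_sum_le_sum_abs _ _
    _ ≤ ∑ _i : Fin n, δ := Finset.sum_le_sum fun i _ => hh i
    _ = n * δ := by simp [mul_comm]

lemma keybound {R δ : ℝ} (hR : 0 ≤ R) (hδ : 0 ≤ δ) (X : Matrix (Fin m) (Fin n) ℝ)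
    (hX : ‖X‖ ≤ R) {A : Matrix (Fin n) (Fin n) ℝ} (hA : A.IsHermitian) {h : ℝ → ℝ}
    (hh : ∀ i, |h (hA.eigenvalues i)| ≤ δ) :
    ‖((traceCLM n).comp (lmulCLM (hA.cfc h))).comp (Aderiv m n X)‖
      ≤ n ^ 2 * (n * δ) * (2 * m * R) := by
  refine ContinuousLinearMap.opNorm_le_bound _ (by positivity) fun h' => ?_
  have hentryB : ∀ a b, |hA.cfc h a b| ≤ n * δ := cfc_entry_le hA hh
  have hentryC : ∀ a b, |Aderiv m n X h' a b| ≤ 2 * m * R * ‖h'‖ := by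
    intro a b
    rw [Aderiv_apply]
    have h1 : |(Xᵀ * h') a b| ≤ m * R * ‖h'‖ := by
      calc |(Xᵀ * h') a b| ≤ m * ‖Xᵀ‖ * ‖h'‖ := mat_mul_entry_le _ _ a b
        _ ≤ m * R * ‖h'‖ := by
            have h0 := (norm_transpose_le X).trans hX
            gcongr
    have h2 : |(h'ᵀ * X) a b| ≤ m * R * ‖h'‖ := by
      calc |(h'ᵀ * X) a b| ≤ m * ‖h'ᵀ‖ * ‖X‖ := mat_mul_entry_le _ _ a b
        _ ≤ m * ‖h'‖ * R := by
            have h3 := norm_transpose_le h'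
            gcongr
        _ = m * R * ‖h'‖ := by ring
    calc |(Xᵀ * h' + h'ᵀ * X) a b| ≤ |(Xᵀ * h') a b| + |(h'ᵀ * X) a b| := by
          rw [Matrix.add_apply]; exact abs_add_le _ _
      _ ≤ 2 * m * R * ‖h'‖ := by linarith
  have hval : ((traceCLM n).comp (lmulCLM (hA.cfc h))).comp (Aderiv m n X) h'
      = (hA.cfc h * Aderiv m n X h').trace := rfl
  rw [hval]
  have := abs_trace_mul_le (β := n * δ) (c := 2 * m * R * ‖h'‖) (by positivity) (by positivity)
    hentryB hentryC
  calc |(hA.cfc h * Aderiv m n X h').trace| ≤ n ^ 2 * (n * δ) * (2 * m * R * ‖h'‖) := this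
    _ = n ^ 2 * (n * δ) * (2 * m * R) * ‖h'‖ := by ring

lemma hasFDerivAt_trace_poly (γ : ℝ) (X : Matrix (Fin m) (Fin n) ℝ)
    (hA : (Xᵀ * X + γ • (1 : Matrix (Fin n) (Fin n) ℝ)).IsHermitian) (N : ℕ) (c : ℕ → ℝ) :
    HasFDerivAt
      (fun Y : Matrix (Fin m) (Fin n) ℝ =>
        ∑ i ∈ Finset.range N, c i * ((Yᵀ * Y + γ • (1 : Matrix (Fin n) (Fin n) ℝ)) ^ i).trace)
      (((traceCLM n).comp (lmulCLM (hA.cfc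
          (fun t => ∑ i ∈ Finset.range N, c i * (i * t ^ (i - 1)))))).comp (Aderiv m n X)) X := by
  have h1 : HasFDerivAt
      (fun Y : Matrix (Fin m) (Fin n) ℝ =>
        ∑ i ∈ Finset.range N, c i * ((Yᵀ * Y + γ • (1 : Matrix (Fin n) (Fin n) ℝ)) ^ i).trace)
      (∑ i ∈ Finset.range N, c i • Dpow γ i X) X :=
    HasFDerivAt.fun_sum fun i _ => (hasFDerivAt_trace_pow_A γ i X).const_mul (c i)
  have hcfc : hA.cfc (fun t => ∑ i ∈ Finset.range N, c i * (i * t ^ (i - 1)))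
      = ∑ i ∈ Finset.range N,
          (c i * i) • (Xᵀ * X + γ • (1 : Matrix (Fin n) (Fin n) ℝ)) ^ (i - 1) := by
    have hfun : (fun t : ℝ => ∑ i ∈ Finset.range N, c i * (i * t ^ (i - 1)))
        = fun t => ∑ i ∈ Finset.range N, (c i * i) * t ^ (i - 1) := by
      funext t; exact Finset.sum_congr rfl fun i _ => by ring
    rw [hfun]
    exact cfc_finsum hA _ _ _
  have heq : (∑ i ∈ Finset.range N, c i • Dpow γ i X)
      = ((traceCLM n).comp (lmulCLM (hA.cfc
          (fun t => ∑ i ∈ Finset.range N, c i * (i * t ^ (i - 1)))))).comp (Aderiv m n X) := by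
    rw [hcfc]
    ext h'
    simp only [ContinuousLinearMap.sum_apply, ContinuousLinearMap.smul_apply,
      ContinuousLinearMap.comp_apply, Dpow, traceCLM_apply, lmulCLM_apply, smul_eq_mul,
      Matrix.sum_mul, Matrix.smul_mul, Matrix.trace_sum, Matrix.trace_smul]
    exact Finset.sum_congr rfl fun i _ => by ring
  rw [heq] at h1
  exact h1

end Part8

section Part9
open Polynomial

lemma eval_derivative_eq (q : Polynomial ℝ) (t : ℝ) :
    (Polynomial.derivative q).eval t
      = ∑ i ∈ Finset.range (q.natDegree + 1), q.coeff i * (i * t ^ (i - 1)) := by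
  rw [Polynomial.derivative_apply,
    Polynomial.sum_over_range' q (by intro k; simp) (q.natDegree + 1) (Nat.lt_succ_self _),
    Polynomial.eval_finset_sum]
  refine Finset.sum_congr rfl fun i _ => ?_
  simp [mul_assoc]

noncomputable def polyAntideriv (r : Polynomial ℝ) : Polynomial ℝ :=
  r.sum fun i a => Polynomial.C (a / (i + 1)) * Polynomial.X ^ (i + 1)

lemma derivative_polyAntideriv (r : Polynomial ℝ) :
    Polynomial.derivative (polyAntideriv r) = r := by
  rw [polyAntideriv, Polynomial.sum, map_sum]
  conv_rhs => rw [← Polynomial.sum_C_mul_X_pow_eq r]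
  rw [Polynomial.sum]
  refine Finset.sum_congr rfl fun i _ => ?_
  rw [Polynomial.derivative_C_mul_X_pow, Nat.add_sub_cancel]
  congr 1
  have hne : ((i : ℝ) + 1) ≠ 0 := by positivity
  push_cast
  field_simp

lemma exists_poly_C1_approx {a b : ℝ} (hab : a < b) {f f' : ℝ → ℝ}
    (hderiv : ∀ x ∈ Set.Icc a b, HasDerivAt f (f' x) x)
    (hcont : ContinuousOn f' (Set.Icc a b)) {ε : ℝ} (hε : 0 < ε) :
    ∃ q : Polynomial ℝ, (∀ x ∈ Set.Icc a b, |q.eval x - f x| ≤ ε) ∧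
      (∀ x ∈ Set.Icc a b, |(Polynomial.derivative q).eval x - f' x| ≤ ε) := by
  have hba : 0 < b - a := by linarith
  set ε₀ := min ε (ε / (b - a)) with hε₀def
  have hε₀ : 0 < ε₀ := lt_min hε (div_pos hε hba)
  obtain ⟨r, hr⟩ := exists_polynomial_near_of_continuousOn a b f' hcont ε₀ hε₀
  set P := polyAntideriv r + Polynomial.C (f a - (polyAntideriv r).eval a) with hPdef
  have hdP : Polynomial.derivative P = r := by
    rw [hPdef, map_add, Polynomial.derivative_C, add_zero, derivative_polyAntideriv]
  have hPa : P.eval a = f a := by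
    rw [hPdef, Polynomial.eval_add, Polynomial.eval_C]
    ring
  refine ⟨P, ?_, ?_⟩
  · intro x hx
    have key : ∀ y ∈ Set.Icc a b, HasDerivWithinAt (fun t => P.eval t - f t)
        (r.eval y - f' y) (Set.Icc a b) y := by
      intro y hy
      have h1 := (P.hasDerivAt y).sub (hderiv y hy)
      rw [hdP] at h1
      exact h1.hasDerivWithinAt
    have hb : ∀ y ∈ Set.Icc a b, ‖r.eval y - f' y‖ ≤ ε₀ := fun y hy => by
      rw [Real.norm_eq_abs]; exact (hr y hy).le
    have hmvt := (convex_Icc a b).norm_image_sub_le_of_norm_hasDerivWithin_le key hb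
      (Set.left_mem_Icc.mpr hab.le) hx
    rw [hPa] at hmvt
    simp only [sub_self, sub_zero] at hmvt
    have hxa : ‖x - a‖ ≤ b - a := by
      rw [Real.norm_eq_abs, abs_of_nonneg (by linarith [hx.1])]
      linarith [hx.2]
    calc |P.eval x - f x| ≤ ε₀ * ‖x - a‖ := by
          simpa [Real.norm_eq_abs] using hmvt
      _ ≤ (ε / (b - a)) * (b - a) := by
          have h1 : ε₀ ≤ ε / (b - a) := min_le_right _ _
          have h2 : (0:ℝ) ≤ ‖x - a‖ := norm_nonneg _
          have h3 : 0 < ε / (b - a) := div_pos hε hba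
          nlinarith
      _ = ε := div_mul_cancel₀ ε hba.ne'
  · intro x hx
    rw [hdP]
    exact le_trans (hr x hx).le (min_le_left _ _)

end Part9

end MatTop

/-- For `γ > 0` and `p > 0`, the smooth Schatten-p function
`f_p(X) = Tr((XᵀX + γI)^{p/2})`, with the matrix power taken via the spectral
functional calculus, is differentiable on all of `ℝ^{m×n}`. -/
theorem smooth_schatten_differentiable {m n : ℕ} (γ p : ℝ) (hγ : 0 < γ) (hp : 0 < p)
    (hA : ∀ X : Matrix (Fin m) (Fin n) ℝ,
      (Xᵀ * X + γ • (1 : Matrix (Fin n) (Fin n) ℝ)).IsHermitian) :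
    Differentiable ℝ
      (fun X : Matrix (Fin m) (Fin n) ℝ =>
        Matrix.trace ((hA X).cfc (fun t : ℝ => t ^ (p / 2)))) := by
  intro X₀
  letI := @matUniformSpace
  letI := @matTopologicalSpace
  set R : ℝ := ‖X₀‖ + 1 with hRdef
  have hR0 : 0 ≤ R := by positivity
  set K : ℝ := γ + m * n * R ^ 2 + 1 with hKdef
  have hmn : (0:ℝ) ≤ (m:ℝ) * n * R ^ 2 := by positivity
  have hγK : γ < K := by rw [hKdef]; linarith
  set f : ℝ → ℝ := fun t => t ^ (p / 2) with hfdef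
  set f' : ℝ → ℝ := fun t => (p / 2) * t ^ (p / 2 - 1) with hf'def
  have hderiv : ∀ x ∈ Set.Icc γ K, HasDerivAt f (f' x) x := by
    intro x hx
    exact Real.hasDerivAt_rpow_const (Or.inl (hγ.trans_le hx.1).ne')
  have hcont : ContinuousOn f' (Set.Icc γ K) := by
    intro x hx
    exact (continuousAt_const.mul
      (Real.continuousAt_rpow_const x _ (Or.inl (hγ.trans_le hx.1).ne'))).continuousWithinAt
  have hex : ∀ j : ℕ, ∃ q : Polynomial ℝ,
      (∀ x ∈ Set.Icc γ K, |q.eval x - f x| ≤ 1 / (j + 1)) ∧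
      (∀ x ∈ Set.Icc γ K, |(Polynomial.derivative q).eval x - f' x| ≤ 1 / (j + 1)) :=
    fun j => exists_poly_C1_approx hγK hderiv hcont (by positivity)
  choose q hq1 hq2 using hex
  set s : Set (Matrix (Fin m) (Fin n) ℝ) := Metric.ball X₀ 1 with hsdef
  have hXR : ∀ X ∈ s, ‖X‖ ≤ R := by
    intro X hX
    have h1 : ‖X - X₀‖ < 1 := by
      rw [← dist_eq_norm]
      exact Metric.mem_ball.mp hX
    have h2 := norm_sub_norm_le X X₀
    rw [hRdef]
    linarith
  have heig : ∀ X ∈ s, ∀ i, (hA X).eigenvalues i ∈ Set.Icc γ K := by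
    intro X hX i
    refine ⟨eig_ge hγ X (hA X) i, ?_⟩
    have := eig_le hγ hR0 X (hXR X hX) (hA X) i
    rw [hKdef]
    linarith
  have hFderiv : ∀ j : ℕ, ∀ X, X ∈ s → HasFDerivAt
      (fun Y : Matrix (Fin m) (Fin n) ℝ => ∑ i ∈ Finset.range ((q j).natDegree + 1),
        (q j).coeff i * ((Yᵀ * Y + γ • (1 : Matrix (Fin n) (Fin n) ℝ)) ^ i).trace)
      (((traceCLM n).comp (lmulCLM ((hA X).cfc
        (fun t => (Polynomial.derivative (q j)).eval t)))).comp (Aderiv m n X)) X := by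
    intro j X _
    have h := hasFDerivAt_trace_poly γ X (hA X) ((q j).natDegree + 1) ((q j).coeff)
    have hfun : (fun t : ℝ => ∑ i ∈ Finset.range ((q j).natDegree + 1),
        (q j).coeff i * (i * t ^ (i - 1)))
        = fun t => (Polynomial.derivative (q j)).eval t := by
      funext t
      rw [eval_derivative_eq]
    rw [hfun] at h
    exact h
  have hunif : TendstoUniformlyOn
      (fun (j : ℕ) (X : Matrix (Fin m) (Fin n) ℝ) =>
        (((traceCLM n).comp (lmulCLM ((hA X).cfc
          (fun t => (Polynomial.derivative (q j)).eval t)))).comp (Aderiv m n X)))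
      (fun X => ((traceCLM n).comp (lmulCLM ((hA X).cfc f'))).comp (Aderiv m n X))
      atTop s := by
    rw [Metric.tendstoUniformlyOn_iff]
    intro ε hε
    set κ : ℝ := (n:ℝ) ^ 2 * n * (2 * m * R) with hκdef
    have hto : Tendsto (fun j : ℕ => κ * (1 / (j + 1))) atTop (𝓝 0) := by
      have h0 := tendsto_one_div_add_atTop_nhds_zero_nat.const_mul κ
      simpa using h0
    have hev := hto.eventually_lt_const hε
    filter_upwards [hev] with j hj X hX
    rw [dist_comm, dist_eq_norm]
    refine lt_of_le_of_lt ?_ hj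
    have hdiff : (((traceCLM n).comp (lmulCLM ((hA X).cfc
        (fun t => (Polynomial.derivative (q j)).eval t)))).comp (Aderiv m n X))
        - (((traceCLM n).comp (lmulCLM ((hA X).cfc f'))).comp (Aderiv m n X))
        = ((traceCLM n).comp (lmulCLM ((hA X).cfc
            (fun t => (Polynomial.derivative (q j)).eval t - f' t)))).comp (Aderiv m n X) := by
      rw [cfc_sub' (hA X)]
      ext h'
      simp [ContinuousLinearMap.sub_apply, ContinuousLinearMap.comp_apply,
        Matrix.sub_mul, Matrix.trace_sub]
    rw [hdiff]
    have hb : ∀ i, |((fun t => (Polynomial.derivative (q j)).eval t - f' t)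
        ((hA X).eigenvalues i))| ≤ 1 / (j + 1) := fun i => hq2 j _ (heig X hX i)
    have hkb := keybound (δ := 1 / (j + 1))
      (h := fun t => (Polynomial.derivative (q j)).eval t - f' t) hR0 (by positivity) X (hXR X hX) (hA X) hb
    have hring : (n:ℝ) ^ 2 * ((n:ℝ) * (1 / (j + 1))) * (2 * m * R) = κ * (1 / (j + 1)) := by
      rw [hκdef]; ring
    rw [← hring]
    exact hkb
  have hpt : ∀ X, X ∈ s → Tendsto (fun j => ∑ i ∈ Finset.range ((q j).natDegree + 1),
        (q j).coeff i * ((Xᵀ * X + γ • (1 : Matrix (Fin n) (Fin n) ℝ)) ^ i).trace) atTop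
      (𝓝 (((hA X).cfc f).trace)) := by
    intro X hX
    have hFval : ∀ j, (∑ i ∈ Finset.range ((q j).natDegree + 1),
        (q j).coeff i * ((Xᵀ * X + γ • (1 : Matrix (Fin n) (Fin n) ℝ)) ^ i).trace)
        = ((hA X).cfc (fun t => (q j).eval t)).trace := by
      intro j
      have hfun : (fun t : ℝ => (q j).eval t) = fun t =>
          ∑ i ∈ Finset.range ((q j).natDegree + 1), (q j).coeff i * t ^ i := by
        funext t
        exact Polynomial.eval_eq_sum_range t
      rw [hfun, cfc_finsum (hA X) _ _ (fun i => i), Matrix.trace_sum]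
      exact (Finset.sum_congr rfl fun i _ => by rw [Matrix.trace_smul, smul_eq_mul]).symm
    have hbnd : ∀ j, |(∑ i ∈ Finset.range ((q j).natDegree + 1),
        (q j).coeff i * ((Xᵀ * X + γ • (1 : Matrix (Fin n) (Fin n) ℝ)) ^ i).trace)
          - ((hA X).cfc f).trace| ≤ n * (1 / (j + 1)) := by
      intro j
      rw [hFval j, ← Matrix.trace_sub, ← cfc_sub' (hA X)]
      exact value_bound (hA X) (fun i => hq1 j _ (heig X hX i))
    have h0 : Tendsto (fun j : ℕ => (n:ℝ) * (1 / (j + 1))) atTop (𝓝 0) := by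
      simpa using tendsto_one_div_add_atTop_nhds_zero_nat.const_mul (n:ℝ)
    have hsq := squeeze_zero_norm
      (f := fun j => (∑ i ∈ Finset.range ((q j).natDegree + 1),
        (q j).coeff i * ((Xᵀ * X + γ • (1 : Matrix (Fin n) (Fin n) ℝ)) ^ i).trace)
          - ((hA X).cfc f).trace)
      (a := fun j => (n:ℝ) * (1 / (j + 1)))
      (fun j => by simpa only [Real.norm_eq_abs] using hbnd j) h0
    exact tendsto_sub_nhds_zero_iff.mp hsq
  have hmem : X₀ ∈ s := Metric.mem_ball_self one_pos
  have hfin := hasFDerivAt_of_tendstoUniformlyOn Metric.isOpen_ball hunif hFderiv hpt hmem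
  exact hfin.differentiableAt
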